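/- Let I = (F, W, (C_f)_{f∈F}, (C_w)_{w∈W}) be a matching market instance in which every choice function is substitutable and consistent, and let S be its set of stable matchings. Then: (i) S is nonempty; (ii) the relation ⪰ defined by μ ⪰ μ' iff C_f(μ(f) ∪ μ'(f)) = μ(f) for all f ∈ F is a partial order on S; (iii) every pair μ, μ' ∈ S has a least upper bound and a greatest lower bound in (S, ⪰); and (iv) there exist a firm-optimal stable matching μ_F and a worker-optimal stable matching μ_W in S such that μ_F ⪰ μ ⪰ μ_W for all μ ∈ S. -/

import Mathlib

open Finset

/-- A choice function is substitutable if `a ∈ C S` implies `a ∈ C (T ∪ {a})`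
for every `T ⊆ S`. -/
def Substitutable {α : Type*} [DecidableEq α] (C : Finset α → Finset α) : Prop :=
  ∀ (S T : Finset α) (a : α), T ⊆ S → a ∈ C S → a ∈ C (insert a T)

/-- A choice function is consistent if `C S ⊆ T ⊆ S` implies `C T = C S`. -/
def Consistent {α : Type*} (C : Finset α → Finset α) : Prop :=
  ∀ (S T : Finset α), C S ⊆ T → T ⊆ S → C T = C S

/-- The set of workers matched to firm `f` in the matching `μ`. -/
def matchedW {F W : Type*} [DecidableEq F] [DecidableEq W]
    (μ : Finset (F × W)) (f : F) : Finset W :=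
  (μ.filter fun p => p.1 = f).image Prod.snd

/-- The set of firms matched to worker `w` in the matching `μ`. -/
def matchedF {F W : Type*} [DecidableEq F] [DecidableEq W]
    (μ : Finset (F × W)) (w : W) : Finset F :=
  (μ.filter fun p => p.2 = w).image Prod.fst

/-- A matching is stable if it is individually rational and has no blocking pair. -/
def IsStable {F W : Type*} [DecidableEq F] [DecidableEq W]
    (Cf : F → Finset W → Finset W) (Cw : W → Finset F → Finset F)
    (μ : Finset (F × W)) : Prop :=
  (∀ f, Cf f (matchedW μ f) = matchedW μ f) ∧
  (∀ w, Cw w (matchedF μ w) = matchedF μ w) ∧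
  (∀ f w, (f, w) ∉ μ →
    ¬ (f ∈ Cw w (insert f (matchedF μ w)) ∧ w ∈ Cf f (insert w (matchedW μ f))))

/-- The firm (partial) order on matchings: `μ ⪰ μ'` iff
`C_f(μ(f) ∪ μ'(f)) = μ(f)` for every firm `f`. -/
def FirmGE {F W : Type*} [DecidableEq F] [DecidableEq W]
    (Cf : F → Finset W → Finset W) (μ μ' : Finset (F × W)) : Prop :=
  ∀ f, Cf f (matchedW μ f ∪ matchedW μ' f) = matchedW μ f


namespace StableLattice

noncomputable instance finsetCompleteLattice {gamma : Type*} [Fintype gamma]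
    [DecidableEq gamma] : CompleteLattice (Finset gamma) :=
  Fintype.toCompleteLattice _

section PathIndep

variable {α : Type*} [DecidableEq α] {C : Finset α → Finset α}

/-- Substitutable + consistent choice functions are path independent. -/
lemma pathIndep (hsub : ∀ S, C S ⊆ S) (hs : Substitutable C) (hc : Consistent C)
    (Y X : Finset α) : C (Y ∪ X) = C (Y ∪ C X) := by
  have h1 : C (Y ∪ X) ⊆ Y ∪ C X := by
    intro a ha
    by_cases hY : a ∈ Y
    · exact Finset.mem_union_left _ hY
    · have haX : a ∈ X := by
        rcases Finset.mem_union.1 (hsub _ ha) with h | h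
        · exact absurd h hY
        · exact h
      have h2 := hs (Y ∪ X) X a Finset.subset_union_right ha
      rw [Finset.insert_eq_self.2 haX] at h2
      exact Finset.mem_union_right _ h2
  exact (hc (Y ∪ X) (Y ∪ C X) h1 (Finset.union_subset_union_right (hsub X))).symm

/-- Blair's transfer lemma: if `C (M ∪ M') = M` and `a ∈ C (insert a M)`, then
`a ∈ C (insert a M')`, and if moreover `a ∉ M` then `a ∉ M'`. -/
lemma transfer (hsub : ∀ S, C S ⊆ S) (hs : Substitutable C) (hc : Consistent C)
    {M M' : Finset α} (hge : C (M ∪ M') = M) {a : α} (ha : a ∈ C (insert a M)) :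
    a ∈ C (insert a M') ∧ (a ∉ M → a ∉ M') := by
  have hpi := pathIndep hsub hs hc {a} (M ∪ M')
  rw [hge, ← Finset.insert_eq, ← Finset.insert_eq] at hpi
  have hbig : a ∈ C (insert a (M ∪ M')) := by rw [hpi]; exact ha
  have h1 : a ∈ C (insert a M') := by
    have hTS : M' ⊆ insert a (M ∪ M') := fun x hx =>
      Finset.mem_insert_of_mem (Finset.mem_union_right _ hx)
    exact hs _ _ a hTS hbig
  refine ⟨h1, fun haM haM' => ?_⟩
  have heq : insert a (M ∪ M') = M ∪ M' :=
    Finset.insert_eq_self.2 (Finset.mem_union_right _ haM')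
  rw [heq, hge] at hpi
  rw [← hpi] at ha
  exact haM ha

end PathIndep

section Market

set_option linter.unusedSectionVars false

variable {F W : Type*} [Fintype F] [Fintype W] [DecidableEq F] [DecidableEq W]

lemma mem_matchedW {μ : Finset (F × W)} {f : F} {w : W} :
    w ∈ matchedW μ f ↔ (f, w) ∈ μ := by
  unfold matchedW
  simp only [Finset.mem_image, Finset.mem_filter]
  constructor
  · rintro ⟨⟨a, b⟩, ⟨hm, rfl⟩, rfl⟩; exact hm
  · exact fun h => ⟨(f, w), ⟨h, rfl⟩, rfl⟩

lemma mem_matchedF {μ : Finset (F × W)} {f : F} {w : W} :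
    f ∈ matchedF μ w ↔ (f, w) ∈ μ := by
  unfold matchedF
  simp only [Finset.mem_image, Finset.mem_filter]
  constructor
  · rintro ⟨⟨a, b⟩, ⟨hm, rfl⟩, rfl⟩; exact hm
  · exact fun h => ⟨(f, w), ⟨h, rfl⟩, rfl⟩

lemma matchedW_mono {μ μ' : Finset (F × W)} (h : μ ⊆ μ') (f : F) :
    matchedW μ f ⊆ matchedW μ' f :=
  fun _ hw => mem_matchedW.2 (h (mem_matchedW.1 hw))

lemma matchedF_mono {μ μ' : Finset (F × W)} (h : μ ⊆ μ') (w : W) :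
    matchedF μ w ⊆ matchedF μ' w :=
  fun _ hf => mem_matchedF.2 (h (mem_matchedF.1 hf))

variable (Cf : F → Finset W → Finset W) (Cw : W → Finset F → Finset F)

/-- Firm-side pointwise choice on sets of pairs. -/
def chooseF (X : Finset (F × W)) : Finset (F × W) :=
  X.filter fun p => p.2 ∈ Cf p.1 (matchedW X p.1)

/-- Worker-side pointwise choice on sets of pairs. -/
def chooseW (X : Finset (F × W)) : Finset (F × W) :=
  X.filter fun p => p.1 ∈ Cw p.2 (matchedF X p.2)

variable {Cf Cw}

lemma rejF_mono (hfs : ∀ f, Substitutable (Cf f)) {X Y : Finset (F × W)} (hXY : X ⊆ Y) :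
    X \ chooseF Cf X ⊆ Y \ chooseF Cf Y := by
  intro p hp
  rw [Finset.mem_sdiff] at hp ⊢
  obtain ⟨hpX, hrej⟩ := hp
  refine ⟨hXY hpX, fun hmem => hrej ?_⟩
  rw [chooseF, Finset.mem_filter] at hmem ⊢
  refine ⟨hpX, ?_⟩
  have h2 := hfs p.1 (matchedW Y p.1) (matchedW X p.1) p.2 (matchedW_mono hXY p.1) hmem.2
  rwa [Finset.insert_eq_self.2 (mem_matchedW.2 hpX)] at h2

lemma rejW_mono (hws : ∀ w, Substitutable (Cw w)) {X Y : Finset (F × W)} (hXY : X ⊆ Y) :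
    X \ chooseW Cw X ⊆ Y \ chooseW Cw Y := by
  intro p hp
  rw [Finset.mem_sdiff] at hp ⊢
  obtain ⟨hpX, hrej⟩ := hp
  refine ⟨hXY hpX, fun hmem => hrej ?_⟩
  rw [chooseW, Finset.mem_filter] at hmem ⊢
  refine ⟨hpX, ?_⟩
  have h2 := hws p.2 (matchedF Y p.2) (matchedF X p.2) p.1 (matchedF_mono hXY p.2) hmem.2
  rwa [Finset.insert_eq_self.2 (mem_matchedF.2 hpX)] at h2

/-- The ambient lattice for the fixed-point construction. -/
abbrev PT (F W : Type*) [Fintype F] [Fintype W] [DecidableEq F] [DecidableEq W] :=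
  Finset (F × W) × (Finset (F × W))ᵒᵈ

variable (Cf Cw)

/-- The Hatfield–Milgrom / Fleiner operator. -/
noncomputable def Phi (hfs : ∀ f, Substitutable (Cf f)) (hws : ∀ w, Substitutable (Cw w)) :
    PT F W →o PT F W where
  toFun p := (Finset.univ \ (OrderDual.ofDual p.2 \ chooseW Cw (OrderDual.ofDual p.2)),
    OrderDual.toDual (Finset.univ \ (p.1 \ chooseF Cf p.1)))
  monotone' := by
    rintro p q hpq
    have h1 : p.1 ⊆ q.1 := hpq.1
    have h2 : (OrderDual.ofDual q.2 : Finset (F × W)) ⊆ OrderDual.ofDual p.2 := hpq.2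
    constructor
    · exact Finset.sdiff_subset_sdiff (Finset.Subset.refl _) (rejW_mono hws h2)
    · show Finset.univ \ (q.1 \ chooseF Cf q.1) ⊆ Finset.univ \ (p.1 \ chooseF Cf p.1)
      exact Finset.sdiff_subset_sdiff (Finset.Subset.refl _) (rejF_mono hfs h1)

variable {Cf Cw}
variable (hfsub : ∀ f S, Cf f S ⊆ S) (hwsub : ∀ w S, Cw w S ⊆ S)
variable (hfs : ∀ f, Substitutable (Cf f)) (hfc : ∀ f, Consistent (Cf f))
variable (hws : ∀ w, Substitutable (Cw w)) (hwc : ∀ w, Consistent (Cw w))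

/-- The matching associated to a point of the lattice. -/
def mu (p : PT F W) : Finset (F × W) := p.1 ∩ OrderDual.ofDual p.2

section FP

variable {p : PT F W} (hp : Phi Cf Cw hfs hws p = p)

include hfsub hwsub hfs hfc hws hwc hp

lemma fp_eqA : p.1 = Finset.univ \ (OrderDual.ofDual p.2 \ chooseW Cw (OrderDual.ofDual p.2)) :=
  (congrArg Prod.fst hp).symm

lemma fp_eqB : (OrderDual.ofDual p.2 : Finset (F × W)) =
    Finset.univ \ (p.1 \ chooseF Cf p.1) :=
  (congrArg (fun r : PT F W => (OrderDual.ofDual r.2 : Finset (F × W))) hp).symm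

lemma fp_muF : mu p = chooseF Cf p.1 := by
  have hB := fp_eqB hfsub hwsub hfs hfc hws hwc hp
  ext q
  rw [mu, Finset.mem_inter, hB, Finset.mem_sdiff, Finset.mem_sdiff]
  have hq : q ∈ chooseF Cf p.1 → q ∈ p.1 := fun h => Finset.filter_subset _ _ h
  constructor
  · rintro ⟨hq1, -, hq2⟩
    by_contra hc'
    exact hq2 ⟨hq1, hc'⟩
  · intro h
    exact ⟨hq h, Finset.mem_univ q, fun hh => hh.2 h⟩

lemma fp_muW : mu p = chooseW Cw (OrderDual.ofDual p.2) := by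
  have hA := fp_eqA hfsub hwsub hfs hfc hws hwc hp
  ext q
  rw [mu, Finset.mem_inter, hA, Finset.mem_sdiff, Finset.mem_sdiff]
  have hq : q ∈ chooseW Cw (OrderDual.ofDual p.2) →
      q ∈ (OrderDual.ofDual p.2 : Finset (F × W)) :=
    fun h => Finset.filter_subset _ _ h
  constructor
  · rintro ⟨⟨-, hq2⟩, hq1⟩
    by_contra hc'
    exact hq2 ⟨hq1, hc'⟩
  · intro h
    exact ⟨⟨Finset.mem_univ q, fun hh => hh.2 h⟩, hq h⟩

lemma fp_cover : ∀ q : F × W, q ∈ p.1 ∨ q ∈ (OrderDual.ofDual p.2 : Finset (F × W)) := by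
  intro q
  by_cases h : q ∈ (OrderDual.ofDual p.2 : Finset (F × W))
  · exact Or.inr h
  · refine Or.inl ?_
    rw [fp_eqA hfsub hwsub hfs hfc hws hwc hp, Finset.mem_sdiff]
    exact ⟨Finset.mem_univ q, fun hh => h (Finset.mem_sdiff.1 hh).1⟩

lemma fp_matchW (f : F) : matchedW (mu p) f = Cf f (matchedW p.1 f) := by
  rw [fp_muF hfsub hwsub hfs hfc hws hwc hp]
  ext w
  rw [mem_matchedW, chooseF, Finset.mem_filter]
  constructor
  · exact fun h => h.2
  · intro h
    exact ⟨mem_matchedW.1 (hfsub f _ h), h⟩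

lemma fp_matchF (w : W) :
    matchedF (mu p) w = Cw w (matchedF (OrderDual.ofDual p.2) w) := by
  rw [fp_muW hfsub hwsub hfs hfc hws hwc hp]
  ext f
  rw [mem_matchedF, chooseW, Finset.mem_filter]
  constructor
  · exact fun h => h.2
  · intro h
    exact ⟨mem_matchedF.1 (hwsub w _ h), h⟩

lemma fp_stable : IsStable Cf Cw (mu p) := by
  have hmW : ∀ f, matchedW (mu p) f = Cf f (matchedW p.1 f) :=
    fp_matchW hfsub hwsub hfs hfc hws hwc hp
  have hmF : ∀ w, matchedF (mu p) w = Cw w (matchedF (OrderDual.ofDual p.2) w) :=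
    fp_matchF hfsub hwsub hfs hfc hws hwc hp
  have hsubA : mu p ⊆ p.1 := Finset.inter_subset_left
  have hsubB : mu p ⊆ (OrderDual.ofDual p.2 : Finset (F × W)) := Finset.inter_subset_right
  refine ⟨?_, ?_, ?_⟩
  · intro f
    have h1 : Cf f (matchedW p.1 f) ⊆ matchedW (mu p) f := by rw [hmW f]
    have h2 := hfc f (matchedW p.1 f) (matchedW (mu p) f) h1 (matchedW_mono hsubA f)
    rw [h2, ← hmW f]
  · intro w
    have h1 : Cw w (matchedF (OrderDual.ofDual p.2) w) ⊆ matchedF (mu p) w := by rw [hmF w]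
    have h2 := hwc w _ (matchedF (mu p) w) h1 (matchedF_mono hsubB w)
    rw [h2, ← hmF w]
  · rintro f w hnm ⟨hw1, hw2⟩
    rcases fp_cover hfsub hwsub hfs hfc hws hwc hp (f, w) with hA | hB
    · have hins : insert w (matchedW (mu p) f) ⊆ matchedW p.1 f :=
        Finset.insert_subset (mem_matchedW.2 hA) (matchedW_mono hsubA f)
      have hsub1 : Cf f (matchedW p.1 f) ⊆ insert w (matchedW (mu p) f) := by
        rw [← hmW f]; exact Finset.subset_insert _ _
      have h2 := hfc f (matchedW p.1 f) _ hsub1 hins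
      rw [h2, ← hmW f] at hw2
      exact hnm (mem_matchedW.1 hw2)
    · have hins : insert f (matchedF (mu p) w) ⊆ matchedF (OrderDual.ofDual p.2) w :=
        Finset.insert_subset (mem_matchedF.2 hB) (matchedF_mono hsubB w)
      have hsub1 : Cw w (matchedF (OrderDual.ofDual p.2) w) ⊆ insert f (matchedF (mu p) w) := by
        rw [← hmF w]; exact Finset.subset_insert _ _
      have h2 := hwc w _ _ hsub1 hins
      rw [h2, ← hmF w] at hw1
      exact hnm (mem_matchedF.1 hw1)

lemma fp_le_firmGE {q : PT F W} (hq : Phi Cf Cw hfs hws q = q) (hle : p ≤ q) :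
    FirmGE Cf (mu q) (mu p) := by
  intro f
  have h1 : matchedW (mu q) f = Cf f (matchedW q.1 f) :=
    fp_matchW hfsub hwsub hfs hfc hws hwc hq f
  have hpq : p.1 ⊆ q.1 := hle.1
  have h2 : matchedW (mu q) f ∪ matchedW (mu p) f ⊆ matchedW q.1 f := by
    refine Finset.union_subset ?_ ?_
    · rw [h1]; exact hfsub f _
    · exact matchedW_mono (Finset.inter_subset_left.trans hpq) f
  have h3 : Cf f (matchedW q.1 f) ⊆ matchedW (mu q) f ∪ matchedW (mu p) f := by
    rw [← h1]; exact Finset.subset_union_left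
  have h4 := hfc f (matchedW q.1 f) _ h3 h2
  rw [h4, ← h1]

end FP

variable (Cf Cw)

/-- The canonical fixed point associated to a stable matching. -/
def fpOf (μ : Finset (F × W)) : PT F W :=
  (Finset.univ.filter fun q => q ∈ μ ∨ q.2 ∉ Cf q.1 (insert q.2 (matchedW μ q.1)),
   OrderDual.toDual
     (Finset.univ.filter fun q => q ∈ μ ∨ q.2 ∈ Cf q.1 (insert q.2 (matchedW μ q.1))))

variable {Cf Cw}

lemma mem_fpA {μ : Finset (F × W)} {q : F × W} :
    q ∈ (fpOf Cf μ).1 ↔ q ∈ μ ∨ q.2 ∉ Cf q.1 (insert q.2 (matchedW μ q.1)) := by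
  rw [fpOf, Finset.mem_filter]
  simp

lemma mem_fpB {μ : Finset (F × W)} {q : F × W} :
    q ∈ (OrderDual.ofDual (fpOf Cf μ).2 : Finset (F × W)) ↔
      q ∈ μ ∨ q.2 ∈ Cf q.1 (insert q.2 (matchedW μ q.1)) := by
  show q ∈ Finset.univ.filter _ ↔ _
  rw [Finset.mem_filter]
  simp

lemma mu_fpOf (μ : Finset (F × W)) : mu (fpOf Cf μ) = μ := by
  ext q
  rw [mu, Finset.mem_inter, mem_fpA, mem_fpB]
  by_cases h : q ∈ μ <;> simp [h] <;> tauto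

variable {μ : Finset (F × W)} (hst : IsStable Cf Cw μ)

include hfsub hfs hfc hst in
lemma stable_A_choice (f : F) : Cf f (matchedW (fpOf Cf μ).1 f) = matchedW μ f := by
  set S := matchedW (fpOf Cf μ).1 f with hS
  have hmem : ∀ w : W, w ∈ S ↔ (f, w) ∈ μ ∨ w ∉ Cf f (insert w (matchedW μ f)) := by
    intro w
    rw [hS, mem_matchedW, mem_fpA]
  have hMS : matchedW μ f ⊆ S := fun w hw => (hmem w).2 (Or.inl (mem_matchedW.1 hw))
  have hCS : Cf f S ⊆ matchedW μ f := by
    intro w hw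
    have hw' : w ∈ Cf f (insert w (matchedW μ f)) := hfs f S (matchedW μ f) w hMS hw
    by_contra hnm
    rcases (hmem w).1 (hfsub f S hw) with h | h
    · exact hnm (mem_matchedW.2 h)
    · exact h hw'
  have h2 := hfc f S (matchedW μ f) hCS hMS
  rw [hst.1 f] at h2
  exact h2.symm

include hfsub hwsub hfs hws hwc hst in
lemma stable_B_choice (w : W) :
    Cw w (matchedF (OrderDual.ofDual (fpOf Cf μ).2) w) = matchedF μ w := by
  set S := matchedF (OrderDual.ofDual (fpOf Cf μ).2 : Finset (F × W)) w with hS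
  have hmem : ∀ f : F, f ∈ S ↔ (f, w) ∈ μ ∨ w ∈ Cf f (insert w (matchedW μ f)) := by
    intro f
    rw [hS, mem_matchedF, mem_fpB]
  have hMS : matchedF μ w ⊆ S := fun f hf => (hmem f).2 (Or.inl (mem_matchedF.1 hf))
  have hCS : Cw w S ⊆ matchedF μ w := by
    intro f hf
    have hf' : f ∈ Cw w (insert f (matchedF μ w)) := hws w S (matchedF μ w) f hMS hf
    by_contra hnm
    rcases (hmem f).1 (hwsub w S hf) with h | h
    · exact hnm (mem_matchedF.2 h)
    · exact hst.2.2 f w (fun hh => hnm (mem_matchedF.2 hh)) ⟨hf', h⟩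
  have h2 := hwc w S (matchedF μ w) hCS hMS
  rw [hst.2.1 w] at h2
  exact h2.symm

include hfsub hfs hfc hst in
lemma chooseF_fpOf : chooseF Cf (fpOf Cf μ).1 = μ := by
  ext q
  rw [chooseF, Finset.mem_filter]
  constructor
  · rintro ⟨-, hq2⟩
    rw [stable_A_choice hfsub hfs hfc hst q.1] at hq2
    exact mem_matchedW.1 hq2
  · intro hq
    refine ⟨mem_fpA.2 (Or.inl hq), ?_⟩
    rw [stable_A_choice hfsub hfs hfc hst q.1]
    exact mem_matchedW.2 hq

include hfsub hwsub hfs hws hwc hst in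
lemma chooseW_fpOf : chooseW Cw (OrderDual.ofDual (fpOf Cf μ).2 : Finset (F × W)) = μ := by
  ext q
  rw [chooseW, Finset.mem_filter]
  constructor
  · rintro ⟨-, hq2⟩
    rw [stable_B_choice hfsub hwsub hfs hws hwc hst q.2] at hq2
    exact mem_matchedF.1 hq2
  · intro hq
    refine ⟨mem_fpB.2 (Or.inl hq), ?_⟩
    rw [stable_B_choice hfsub hwsub hfs hws hwc hst q.2]
    exact mem_matchedF.2 hq

include hfsub hwsub hfc hwc hst in
lemma fpOf_fixed : Phi Cf Cw hfs hws (fpOf Cf μ) = fpOf Cf μ := by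
  have hA : Finset.univ \
      ((OrderDual.ofDual (fpOf Cf μ).2 : Finset (F × W)) \
        chooseW Cw (OrderDual.ofDual (fpOf Cf μ).2)) = (fpOf Cf μ).1 := by
    rw [chooseW_fpOf hfsub hwsub hfs hws hwc hst]
    ext q
    rw [Finset.mem_sdiff, Finset.mem_sdiff, mem_fpA, mem_fpB]
    by_cases h : q ∈ μ <;> simp [h] <;> tauto
  have hB : Finset.univ \ ((fpOf Cf μ).1 \ chooseF Cf (fpOf Cf μ).1) =
      (OrderDual.ofDual (fpOf Cf μ).2 : Finset (F × W)) := by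
    rw [chooseF_fpOf hfsub hfs hfc hst]
    ext q
    rw [Finset.mem_sdiff, Finset.mem_sdiff, mem_fpB, mem_fpA]
    by_cases h : q ∈ μ <;> simp [h] <;> tauto
  refine Prod.ext hA (congrArg OrderDual.toDual hB)

omit hst

include hfsub hfs hfc in
lemma firmGE_fpOf_le {μ' : Finset (F × W)} (hst : IsStable Cf Cw μ)
    (hst' : IsStable Cf Cw μ') (hge : FirmGE Cf μ μ') :
    fpOf Cf μ' ≤ fpOf Cf μ := by
  have key : ∀ q : F × W, q.2 ∈ Cf q.1 (insert q.2 (matchedW μ q.1)) →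
      q.2 ∈ Cf q.1 (insert q.2 (matchedW μ' q.1)) ∧
        (q.2 ∉ matchedW μ q.1 → q.2 ∉ matchedW μ' q.1) := by
    intro q hq
    exact transfer (hsub := hfsub q.1) (hs := hfs q.1) (hc := hfc q.1) (hge q.1) hq
  constructor
  · -- A side: (fpOf μ').1 ⊆ (fpOf μ).1
    intro q hq
    rw [mem_fpA] at hq ⊢
    by_contra hcon
    push_neg at hcon
    obtain ⟨hnm, hc2⟩ := hcon
    obtain ⟨k1, k2⟩ := key q hc2
    rcases hq with h | h
    · exact (k2 (fun hh => hnm (mem_matchedW.1 hh))) (mem_matchedW.2 h)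
    · exact h k1
  · -- B side (dual): B μ ⊆ B μ'
    show (OrderDual.ofDual (fpOf Cf μ).2 : Finset (F × W)) ⊆
      OrderDual.ofDual (fpOf Cf μ').2
    intro q hq
    rw [mem_fpB] at hq ⊢
    rcases hq with h | h
    · refine Or.inr ?_
      have h1 : q.2 ∈ Cf q.1 (matchedW μ q.1 ∪ matchedW μ' q.1) := by
        rw [hge q.1]; exact mem_matchedW.2 h
      exact hfs q.1 _ (matchedW μ' q.1) q.2 Finset.subset_union_right h1
    · exact Or.inr (key q h).1

end Market

end StableLattice


set_option maxHeartbeats 2000000 in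
/-- **The stable matching lattice (Blair).** In a matching market with substitutable
and consistent choice functions: stable matchings exist, the firm order `⪰` is a
partial order on them, any two stable matchings have a least upper bound and a
greatest lower bound, and firm-optimal and worker-optimal stable matchings exist. -/
theorem stable_matching_lattice
    {F W : Type*} [Fintype F] [Fintype W] [DecidableEq F] [DecidableEq W]
    (Cf : F → Finset W → Finset W) (Cw : W → Finset F → Finset F)
    (hfsub : ∀ f S, Cf f S ⊆ S) (hwsub : ∀ w S, Cw w S ⊆ S)
    (hfs : ∀ f, Substitutable (Cf f)) (hfc : ∀ f, Consistent (Cf f))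
    (hws : ∀ w, Substitutable (Cw w)) (hwc : ∀ w, Consistent (Cw w)) :
    (∃ μ, IsStable Cf Cw μ) ∧
    (∀ μ, IsStable Cf Cw μ → FirmGE Cf μ μ) ∧
    (∀ μ μ', IsStable Cf Cw μ → IsStable Cf Cw μ' →
      FirmGE Cf μ μ' → FirmGE Cf μ' μ → μ = μ') ∧
    (∀ μ₁ μ₂ μ₃, IsStable Cf Cw μ₁ → IsStable Cf Cw μ₂ → IsStable Cf Cw μ₃ →
      FirmGE Cf μ₁ μ₂ → FirmGE Cf μ₂ μ₃ → FirmGE Cf μ₁ μ₃) ∧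
    (∀ μ μ', IsStable Cf Cw μ → IsStable Cf Cw μ' →
      (∃ ν, IsStable Cf Cw ν ∧ FirmGE Cf ν μ ∧ FirmGE Cf ν μ' ∧
        ∀ l, IsStable Cf Cw l → FirmGE Cf l μ → FirmGE Cf l μ' → FirmGE Cf l ν) ∧
      (∃ ν, IsStable Cf Cw ν ∧ FirmGE Cf μ ν ∧ FirmGE Cf μ' ν ∧
        ∀ l, IsStable Cf Cw l → FirmGE Cf μ l → FirmGE Cf μ' l → FirmGE Cf ν l)) ∧
    (∃ μF, IsStable Cf Cw μF ∧ ∀ μ, IsStable Cf Cw μ → FirmGE Cf μF μ) ∧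
    (∃ μW, IsStable Cf Cw μW ∧ ∀ μ, IsStable Cf Cw μ → FirmGE Cf μ μW) := by
  classical
  have hfix : ∀ {μ : Finset (F × W)}, IsStable Cf Cw μ →
      StableLattice.Phi Cf Cw hfs hws (StableLattice.fpOf Cf μ) = StableLattice.fpOf Cf μ :=
    fun h => StableLattice.fpOf_fixed hfsub hwsub hfs hfc hws hwc h
  have hstab : ∀ p : StableLattice.PT F W,
      StableLattice.Phi Cf Cw hfs hws p = p → IsStable Cf Cw (StableLattice.mu p) :=
    fun _ hp => StableLattice.fp_stable hfsub hwsub hfs hfc hws hwc hp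
  have hGE : ∀ p q : StableLattice.PT F W, StableLattice.Phi Cf Cw hfs hws p = p →
      StableLattice.Phi Cf Cw hfs hws q = q → p ≤ q →
      FirmGE Cf (StableLattice.mu q) (StableLattice.mu p) :=
    fun _ _ hp hq hle => StableLattice.fp_le_firmGE hfsub hwsub hfs hfc hws hwc hp hq hle
  have hLE : ∀ μ μ' : Finset (F × W), IsStable Cf Cw μ → IsStable Cf Cw μ' →
      FirmGE Cf μ μ' → StableLattice.fpOf Cf μ' ≤ StableLattice.fpOf Cf μ :=
    fun _ _ h h' hge => StableLattice.firmGE_fpOf_le hfsub hfs hfc h h' hge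
  let FP := Function.fixedPoints ⇑(StableLattice.Phi Cf Cw hfs hws)
  have hmem : ∀ {μ : Finset (F × W)}, IsStable Cf Cw μ → StableLattice.fpOf Cf μ ∈ FP :=
    fun h => hfix h
  refine ⟨?_, ?_, ?_, ?_, ?_, ?_, ?_⟩
  · -- existence
    exact ⟨StableLattice.mu (⊤ : FP).val, hstab _ (⊤ : FP).prop⟩
  · -- reflexivity
    intro μ hst f
    rw [Finset.union_self]
    exact hst.1 f
  · -- antisymmetry
    intro μ μ' h h' hge hge'
    have e : StableLattice.fpOf Cf μ = StableLattice.fpOf Cf μ' :=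
      le_antisymm (hLE μ' μ h' h hge') (hLE μ μ' h h' hge)
    calc μ = StableLattice.mu (StableLattice.fpOf Cf μ) := (StableLattice.mu_fpOf μ).symm
    _ = StableLattice.mu (StableLattice.fpOf Cf μ') := by rw [e]
    _ = μ' := StableLattice.mu_fpOf μ'
  · -- transitivity
    intro μ1 μ2 μ3 h1 h2 h3 g12 g23
    have l : StableLattice.fpOf Cf μ3 ≤ StableLattice.fpOf Cf μ1 :=
      (hLE μ2 μ3 h2 h3 g23).trans (hLE μ1 μ2 h1 h2 g12)
    have := hGE _ _ (hfix h3) (hfix h1) l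
    rwa [StableLattice.mu_fpOf, StableLattice.mu_fpOf] at this
  · -- lub and glb
    intro μ μ' h h'
    let x : FP := ⟨StableLattice.fpOf Cf μ, hmem h⟩
    let y : FP := ⟨StableLattice.fpOf Cf μ', hmem h'⟩
    constructor
    · -- least upper bound
      let z : FP := x ⊔ y
      refine ⟨StableLattice.mu z.val, hstab _ z.prop, ?_, ?_, ?_⟩
      · have := hGE _ _ (hfix h) z.prop (Subtype.coe_le_coe.2 (le_sup_left : x ≤ z))
        rwa [StableLattice.mu_fpOf] at this
      · have := hGE _ _ (hfix h') z.prop (Subtype.coe_le_coe.2 (le_sup_right : y ≤ z))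
        rwa [StableLattice.mu_fpOf] at this
      · intro l hl glμ glμ'
        have hzl : z ≤ ⟨StableLattice.fpOf Cf l, hmem hl⟩ :=
          sup_le (Subtype.mk_le_mk.2 (hLE l μ hl h glμ)) (Subtype.mk_le_mk.2 (hLE l μ' hl h' glμ'))
        have := hGE _ _ z.prop (hfix hl) (Subtype.coe_le_coe.2 hzl)
        rwa [StableLattice.mu_fpOf] at this
    · -- greatest lower bound
      let z : FP := x ⊓ y
      refine ⟨StableLattice.mu z.val, hstab _ z.prop, ?_, ?_, ?_⟩
      · have := hGE _ _ z.prop (hfix h) (Subtype.coe_le_coe.2 (inf_le_left : z ≤ x))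
        rwa [StableLattice.mu_fpOf] at this
      · have := hGE _ _ z.prop (hfix h') (Subtype.coe_le_coe.2 (inf_le_right : z ≤ y))
        rwa [StableLattice.mu_fpOf] at this
      · intro l hl glμ glμ'
        have hlz : (⟨StableLattice.fpOf Cf l, hmem hl⟩ : FP) ≤ z :=
          le_inf (Subtype.mk_le_mk.2 (hLE μ l h hl glμ)) (Subtype.mk_le_mk.2 (hLE μ' l h' hl glμ'))
        have := hGE _ _ (hfix hl) z.prop (Subtype.coe_le_coe.2 hlz)
        rwa [StableLattice.mu_fpOf] at this
  · -- firm-optimal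
    refine ⟨StableLattice.mu (⊤ : FP).val, hstab _ (⊤ : FP).prop, ?_⟩
    intro μ h
    have hle : (⟨StableLattice.fpOf Cf μ, hmem h⟩ : FP) ≤ ⊤ := le_top
    have := hGE _ _ (hfix h) (⊤ : FP).prop (Subtype.coe_le_coe.2 hle)
    rwa [StableLattice.mu_fpOf] at this
  · -- worker-optimal
    refine ⟨StableLattice.mu (⊥ : FP).val, hstab _ (⊥ : FP).prop, ?_⟩
    intro μ h
    have hle : (⊥ : FP) ≤ ⟨StableLattice.fpOf Cf μ, hmem h⟩ := bot_le
    have := hGE _ _ (⊥ : FP).prop (hfix h) (Subtype.coe_le_coe.2 hle)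
    rwa [StableLattice.mu_fpOf] at this
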